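/- arXiv:2012.03582 — 2 statements merged into one kernel-verified Lean document; each statement's English description precedes it below -/
import Mathlib

section
/- Let B_{b,t} be a blossom with tenacity t < l_m, and let v be a vertex such that base^k(v) = b for some k >= 1. If t >= tenacity(base^{k-1}(v)) (interpreting base^0(v) = v), then v belongs to B_{b,t}. -/
open scoped Classical

universe u

variable {V : Type u}

/-- A finite-or-infinite undirected graph together with a matching. -/
structure MatchedGraph (V : Type u) where
  adj : V → V → Prop
  symm : ∀ u v, adj u v → adj v u
  loopless : ∀ v, ¬ adj v v
  M : V → V → Prop
  M_symm : ∀ u v, M u v → M v u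
  M_sub : ∀ u v, M u v → adj u v
  M_matching : ∀ u v w, M u v → M u w → v = w

namespace MatchedGraph

/-- A vertex is unmatched if no matched edge is incident to it. -/
def unmatched (g : MatchedGraph V) (v : V) : Prop := ∀ u, ¬ g.M v u

/-- `p` is a simple alternating path starting at `b` and ending at `v`,
whose first edge is unmatched and whose edges alternate unmatched/matched.
(The `i`-th edge is matched iff `i` is odd.) -/
def AltPath (g : MatchedGraph V) (p : List V) (b v : V) : Prop :=
  p.head? = some b ∧ p.getLast? = some v ∧ p.Nodup ∧
  ∀ i, i + 1 < p.length →
    g.adj (p.getD i b) (p.getD (i + 1) b) ∧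
      (g.M (p.getD i b) (p.getD (i + 1) b) ↔ i % 2 = 1)

/-- An alternating path from an *unmatched* vertex `f` to `v`. -/
def AltPathFrom (g : MatchedGraph V) (p : List V) (f v : V) : Prop :=
  g.unmatched f ∧ g.AltPath p f v

/-- Minimum length of an even alternating path from an unmatched vertex to `v`. -/
noncomputable def evenlevel (g : MatchedGraph V) (v : V) : ℕ∞ :=
  sInf {n : ℕ∞ | ∃ p f, g.AltPathFrom p f v ∧ Even (p.length - 1) ∧
    n = ((p.length - 1 : ℕ) : ℕ∞)}

/-- Minimum length of an odd alternating path from an unmatched vertex to `v`. -/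
noncomputable def oddlevel (g : MatchedGraph V) (v : V) : ℕ∞ :=
  sInf {n : ℕ∞ | ∃ p f, g.AltPathFrom p f v ∧ Odd (p.length - 1) ∧
    n = ((p.length - 1 : ℕ) : ℕ∞)}

noncomputable def tenacity (g : MatchedGraph V) (v : V) : ℕ∞ :=
  g.evenlevel v + g.oddlevel v

noncomputable def minlevel (g : MatchedGraph V) (v : V) : ℕ∞ :=
  min (g.evenlevel v) (g.oddlevel v)

noncomputable def maxlevel (g : MatchedGraph V) (v : V) : ℕ∞ :=
  max (g.evenlevel v) (g.oddlevel v)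

/-- Minimum length of an augmenting path: an alternating path between two
distinct unmatched vertices. -/
noncomputable def lm (g : MatchedGraph V) : ℕ∞ :=
  sInf {n : ℕ∞ | ∃ p f v, g.AltPathFrom p f v ∧ g.unmatched v ∧ f ≠ v ∧
    n = ((p.length - 1 : ℕ) : ℕ∞)}

/-- Minimum tenacity of any vertex. -/
noncomputable def tm (g : MatchedGraph V) : ℕ∞ := ⨅ v, g.tenacity v

/-- `p` is an `evenlevel(v)` path starting at the unmatched vertex `f`. -/
def IsEvenlevelPath (g : MatchedGraph V) (p : List V) (f v : V) : Prop :=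
  g.AltPathFrom p f v ∧ Even (p.length - 1) ∧
    ((p.length - 1 : ℕ) : ℕ∞) = g.evenlevel v

/-- `p` is an `oddlevel(v)` path starting at the unmatched vertex `f`. -/
def IsOddlevelPath (g : MatchedGraph V) (p : List V) (f v : V) : Prop :=
  g.AltPathFrom p f v ∧ Odd (p.length - 1) ∧
    ((p.length - 1 : ℕ) : ℕ∞) = g.oddlevel v

/-- `p` is a `minlevel(v)` path starting at the unmatched vertex `f`. -/
def IsMinlevelPath (g : MatchedGraph V) (p : List V) (f v : V) : Prop :=
  g.AltPathFrom p f v ∧ ((p.length - 1 : ℕ) : ℕ∞) = g.minlevel v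

/-- `p` is a `maxlevel(v)` path starting at the unmatched vertex `f`. -/
def IsMaxlevelPath (g : MatchedGraph V) (p : List V) (f v : V) : Prop :=
  g.AltPathFrom p f v ∧ ((p.length - 1 : ℕ) : ℕ∞) = g.maxlevel v

/-- The vertex at position `i` of `p` (whose prefix from `f` has length `i`)
is BFS-honest w.r.t. `p`. -/
def BFSHonest (g : MatchedGraph V) (p : List V) (f : V) (i : ℕ) : Prop :=
  (Even i → g.evenlevel (p.getD i f) = (i : ℕ∞)) ∧
  (Odd i → g.oddlevel (p.getD i f) = (i : ℕ∞))

/-- `u` is a predecessor of `v`: `(u, v)` is the last edge of some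
`minlevel(v)` path. -/
def IsPred (g : MatchedGraph V) (u v : V) : Prop :=
  ∃ p f, g.IsMinlevelPath p f v ∧ 2 ≤ p.length ∧ p.getD (p.length - 2) f = u

/-- A prop is an edge which is the last edge of a minlevel path to one of its
endpoints. -/
def IsPropEdge (g : MatchedGraph V) (u v : V) : Prop :=
  g.IsPred u v ∨ g.IsPred v u

/-- A bridge is an edge that is not a prop. -/
def IsBridge (g : MatchedGraph V) (u v : V) : Prop :=
  g.adj u v ∧ ¬ g.IsPropEdge u v

/-- Tenacity of an edge. -/
noncomputable def etenacity (g : MatchedGraph V) (u v : V) : ℕ∞ :=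
  if g.M u v then g.oddlevel u + g.oddlevel v + 1
  else g.evenlevel u + g.evenlevel v + 1

/-- The set `B(v)` of all `F(p, v)`: for each `evenlevel(v)` or `oddlevel(v)`
path `p`, the vertex on `p` farthest from the unmatched endpoint among the
vertices of tenacity greater than `tenacity(v)`. -/
def Bset (g : MatchedGraph V) (v : V) : Set V :=
  {b | ∃ p f i, (g.IsEvenlevelPath p f v ∨ g.IsOddlevelPath p f v) ∧
    i < p.length ∧ b = p.getD i f ∧ g.tenacity v < g.tenacity b ∧
    ∀ k, i < k → k < p.length → g.tenacity (p.getD k f) ≤ g.tenacity v}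

/-- `b` is the (unique) base of `v`. -/
def baseOf (g : MatchedGraph V) (v b : V) : Prop := g.Bset v = {b}

/-- Iterated bases: `iterBase k v b` means `b = base^k(v)` (with `base^0(v) = v`). -/
def iterBase (g : MatchedGraph V) : ℕ → V → V → Prop
  | 0, v, b => v = b
  | k + 1, v, b => ∃ u, g.iterBase k v u ∧ g.baseOf u b

/-- A vertex is outer if `evenlevel(v) < oddlevel(v)`. -/
def IsOuter (g : MatchedGraph V) (v : V) : Prop := g.evenlevel v < g.oddlevel v

/-- A vertex is inner if it is not outer. -/
def IsInner (g : MatchedGraph V) (v : V) : Prop := g.oddlevel v ≤ g.evenlevel v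

/-- The set `S_{b,t}` of vertices of tenacity `t` with base `b`. -/
def Sset (g : MatchedGraph V) (t : ℕ) (b : V) : Set V :=
  {v | g.tenacity v = (t : ℕ∞) ∧ g.baseOf v b}

/-- The blossom `B_{b,t}`, defined recursively. -/
def blossom (g : MatchedGraph V) : ℕ → V → Set V
  | 0, _ => ∅
  | 1, _ => ∅
  | t + 2, b => g.Sset (t + 2) b ∪
      ⋃ v ∈ {v | (v ∈ g.Sset (t + 2) b ∨ v = b) ∧ g.IsOuter v}, blossom g t v

/-- The nesting depth `N(B_{b,t})` of a blossom. -/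
noncomputable def ndepth (g : MatchedGraph V) [Fintype V] : ℕ → V → ℕ
  | 0, _ => 0
  | 1, _ => 0
  | t + 2, b =>
    if (g.Sset (t + 2) b).Nonempty then
      1 + Finset.univ.sup (fun v =>
        if (v ∈ g.Sset (t + 2) b ∨ v = b) ∧ g.IsOuter v then ndepth g t v else 0)
    else ndepth g t b

/-- `evenlevel(b; v)`: minimum even length of an alternating path from `b` to
`v` starting with an unmatched edge. -/
noncomputable def evenlevelFrom (g : MatchedGraph V) (b v : V) : ℕ∞ :=
  sInf {n : ℕ∞ | ∃ p, g.AltPath p b v ∧ Even (p.length - 1) ∧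
    n = ((p.length - 1 : ℕ) : ℕ∞)}

/-- `oddlevel(b; v)`: minimum odd length of an alternating path from `b` to
`v` starting with an unmatched edge. -/
noncomputable def oddlevelFrom (g : MatchedGraph V) (b v : V) : ℕ∞ :=
  sInf {n : ℕ∞ | ∃ p, g.AltPath p b v ∧ Odd (p.length - 1) ∧
    n = ((p.length - 1 : ℕ) : ℕ∞)}

end MatchedGraph
section Helpers

variable {V : Type u}

/-- sInf of a set of extended naturals is attained if not ⊤. -/
lemma ENat.sInf_mem_of_ne_top {S : Set ℕ∞} (h : sInf S ≠ ⊤) : sInf S ∈ S := by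
  by_contra hn
  have h1 : ∀ a ∈ S, sInf S + 1 ≤ a := by
    intro a ha
    exact Order.add_one_le_of_lt (lt_of_le_of_ne (sInf_le ha) (by rintro rfl; exact hn ha))
  have h2 : sInf S < sInf S + 1 := (ENat.lt_add_one_iff h).mpr le_rfl
  exact absurd (le_sInf h1) (not_le.mpr h2)

lemma getD_zero_of_head? {p : List V} {f b : V} (h : p.head? = some f) :
    p.getD 0 b = f := by
  cases p with
  | nil => simp at h
  | cons a t => simp only [List.head?_cons, Option.some.injEq] at h; simp [h]

lemma getD_last_of_getLast? {p : List V} {v b : V} (h : p.getLast? = some v) :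
    p.getD (p.length - 1) b = v := by
  rw [List.getLast?_eq_getElem?] at h
  obtain ⟨hlt, hv⟩ := List.getElem?_eq_some_iff.mp h
  rw [List.getD_eq_getElem _ _ hlt, hv]

lemma length_pos_of_head? {p : List V} {f : V} (h : p.head? = some f) : 0 < p.length := by
  cases p with
  | nil => simp at h
  | cons a t => simp

namespace MatchedGraph

variable (g : MatchedGraph V)

/-- Truncation of an alternating path is an alternating path. -/
lemma AltPath.take {p : List V} {f v : V} (h : g.AltPath p f v) {i : ℕ}
    (hi : i < p.length) : g.AltPath (p.take (i + 1)) f (p.getD i f) := by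
  obtain ⟨h1, h2, h3, h4⟩ := h
  have hlen : (p.take (i + 1)).length = i + 1 := by
    rw [List.length_take]; omega
  have hgetD : ∀ j, j ≤ i → (p.take (i + 1)).getD j f = p.getD j f := by
    intro j hj
    have hj1 : j < p.length := by omega
    rw [List.getD_eq_getElem _ _ (by omega : j < (p.take (i+1)).length),
      List.getD_eq_getElem _ _ hj1]
    have := List.getElem?_take_of_lt (l := p) (j := i + 1) (i := j) (by omega)
    rw [List.getElem?_eq_getElem (by omega : j < (p.take (i+1)).length),
      List.getElem?_eq_getElem hj1] at this
    exact Option.some.injEq _ _ ▸ (by simpa using this)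
  refine ⟨?_, ?_, h3.sublist (List.take_sublist _ _), ?_⟩
  · cases p with
    | nil => simp at h1
    | cons a t => simpa using h1
  · rw [List.getLast?_eq_getElem?, hlen]
    simp only [Nat.add_sub_cancel]
    rw [List.getElem?_take_of_lt (by omega), List.getElem?_eq_getElem hi,
      List.getD_eq_getElem _ _ hi]
  · intro j hj
    rw [hlen] at hj
    rw [hgetD j (by omega), hgetD (j + 1) (by omega)]
    exact h4 j (by omega)

end MatchedGraph
end Helpers
section Helpers2
variable {V : Type u}

lemma nodup_getD_inj {p : List V} (h : p.Nodup) {i j : ℕ} (hi : i < p.length)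
    (hj : j < p.length) (b : V) (heq : p.getD i b = p.getD j b) : i = j := by
  rw [List.getD_eq_getElem _ _ hi, List.getD_eq_getElem _ _ hj] at heq
  exact (List.Nodup.getElem_inj_iff h).mp heq

namespace MatchedGraph
variable (g : MatchedGraph V)

lemma evenlevel_le {p : List V} {f v : V} (h : g.AltPathFrom p f v)
    (he : Even (p.length - 1)) : g.evenlevel v ≤ ((p.length - 1 : ℕ) : ℕ∞) :=
  sInf_le ⟨p, f, h, he, rfl⟩

lemma oddlevel_le {p : List V} {f v : V} (h : g.AltPathFrom p f v)
    (he : Odd (p.length - 1)) : g.oddlevel v ≤ ((p.length - 1 : ℕ) : ℕ∞) :=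
  sInf_le ⟨p, f, h, he, rfl⟩

lemma exists_evenlevel_path {v : V} (h : g.evenlevel v ≠ ⊤) :
    ∃ p f, g.AltPathFrom p f v ∧ Even (p.length - 1) ∧
      g.evenlevel v = ((p.length - 1 : ℕ) : ℕ∞) := by
  obtain ⟨p, f, h1, h2, h3⟩ := ENat.sInf_mem_of_ne_top h
  exact ⟨p, f, h1, h2, h3⟩

lemma exists_oddlevel_path {v : V} (h : g.oddlevel v ≠ ⊤) :
    ∃ p f, g.AltPathFrom p f v ∧ Odd (p.length - 1) ∧
      g.oddlevel v = ((p.length - 1 : ℕ) : ℕ∞) := by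
  obtain ⟨p, f, h1, h2, h3⟩ := ENat.sInf_mem_of_ne_top h
  exact ⟨p, f, h1, h2, h3⟩

lemma lm_le_oddlevel_of_unmatched {z : V} (hz : g.unmatched z) :
    g.lm ≤ g.oddlevel z := by
  apply le_sInf
  rintro n ⟨p, f, hpf, hodd, rfl⟩
  have h0 : 0 < p.length := length_pos_of_head? hpf.2.1
  have hlen : 2 ≤ p.length := by
    rcases hodd with ⟨m, hm⟩; omega
  have hfz : f ≠ z := by
    intro hEq
    have hg0 : p.getD 0 f = f := getD_zero_of_head? hpf.2.1
    have hgl : p.getD (p.length - 1) f = z := getD_last_of_getLast? hpf.2.2.1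
    have : (0 : ℕ) = p.length - 1 :=
      nodup_getD_inj hpf.2.2.2.1 h0 (by omega) f (by rw [hg0, hgl, hEq])
    omega
  exact sInf_le ⟨p, f, z, hpf, hz, hfz, rfl⟩

lemma unmatched_of_evenlevel_eq_zero {v : V} (h : g.evenlevel v = 0) :
    g.unmatched v := by
  obtain ⟨p, f, hpf, _, hlen⟩ := g.exists_evenlevel_path (v := v) (by rw [h]; simp)
  rw [h] at hlen
  have h0 : 0 < p.length := length_pos_of_head? hpf.2.1
  have hl1 : p.length - 1 = 0 := by exact_mod_cast hlen.symm
  have hfv : f = v := by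
    have hg0 : p.getD 0 f = f := getD_zero_of_head? hpf.2.1
    have hgl : p.getD (p.length - 1) f = v := getD_last_of_getLast? hpf.2.2.1
    rw [hl1] at hgl; rw [hg0] at hgl; exact hgl
  exact hfv ▸ hpf.1

lemma evenlevel_ne_zero_of_matched {v x : V} (h : g.M v x) : g.evenlevel v ≠ 0 := by
  intro h0
  exact g.unmatched_of_evenlevel_eq_zero h0 x h

end MatchedGraph
end Helpers2
section Helpers3
variable {V : Type u}
namespace MatchedGraph
variable (g : MatchedGraph V)

lemma levels_ne_top {v : V} (h : g.tenacity v ≠ ⊤) :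
    g.evenlevel v ≠ ⊤ ∧ g.oddlevel v ≠ ⊤ := by
  unfold tenacity at h
  constructor <;> intro he <;> rw [he] at h <;> simp at h

lemma exists_nat_levels {v : V} (h : g.tenacity v ≠ ⊤) :
    ∃ a b : ℕ, Even a ∧ Odd b ∧ g.evenlevel v = (a : ℕ∞) ∧ g.oddlevel v = (b : ℕ∞) ∧
      g.tenacity v = ((a + b : ℕ) : ℕ∞) := by
  obtain ⟨he, ho⟩ := g.levels_ne_top h
  obtain ⟨p, f, _, hpe, hpl⟩ := g.exists_evenlevel_path he
  obtain ⟨q, fq, _, hqo, hql⟩ := g.exists_oddlevel_path ho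
  refine ⟨_, _, hpe, hqo, hpl, hql, ?_⟩
  rw [tenacity, hpl, hql]; push_cast; ring

lemma second_last_matched {p : List V} {f v : V} (hp : g.AltPathFrom p f v)
    (he : Even (p.length - 1)) (hne : p.length - 1 ≠ 0) :
    g.M (p.getD (p.length - 2) f) v ∧
      g.oddlevel (p.getD (p.length - 2) f) ≤ ((p.length - 2 : ℕ) : ℕ∞) := by
  obtain ⟨hunm, hhead, hlast, hnodup, hedges⟩ := hp
  have h0 : 0 < p.length := length_pos_of_head? hhead
  have h3 : 3 ≤ p.length := by rcases he with ⟨m, hm⟩; omega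
  have hedge := hedges (p.length - 2) (by omega)
  have hidx : p.length - 2 + 1 = p.length - 1 := by omega
  rw [hidx] at hedge
  have hlastv : p.getD (p.length - 1) f = v := getD_last_of_getLast? hlast
  have hM : g.M (p.getD (p.length - 2) f) v := by
    rw [← hlastv]
    refine hedge.2.mpr ?_
    rcases he with ⟨m, hm⟩; omega
  refine ⟨hM, ?_⟩
  have htake := MatchedGraph.AltPath.take g ⟨hhead, hlast, hnodup, hedges⟩
    (i := p.length - 2) (by omega)
  have hidx2 : p.length - 2 + 1 = p.length - 1 := by omega
  rw [hidx2] at htake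
  have hlent : (p.take (p.length - 1)).length = p.length - 1 := by
    rw [List.length_take]; omega
  have hoddlen : Odd ((p.take (p.length - 1)).length - 1) := by
    rw [hlent]; rcases he with ⟨m, hm⟩; exact ⟨p.length / 2 - 1, by omega⟩
  have := g.oddlevel_le ⟨hunm, htake⟩ hoddlen
  rwa [hlent, show p.length - 1 - 1 = p.length - 2 from by omega] at this

lemma oddlevel_partner_le {u x : V} (hM : g.M u x) {a : ℕ}
    (hev : g.evenlevel u = (a : ℕ∞)) :
    g.oddlevel x ≤ ((a - 1 : ℕ) : ℕ∞) ∧ 1 ≤ a := by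
  have hne : g.evenlevel u ≠ ⊤ := by rw [hev]; simp
  obtain ⟨p, f, hp, hpe, hpl⟩ := g.exists_evenlevel_path hne
  have hlen : p.length - 1 = a := by
    rw [hev] at hpl; exact_mod_cast hpl.symm
  have ha : a ≠ 0 := by
    intro h0
    exact g.evenlevel_ne_zero_of_matched hM (by rw [hev, h0]; simp)
  obtain ⟨hM2, hodd⟩ := g.second_last_matched hp (hlen ▸ hpe) (by omega)
  have hx : p.getD (p.length - 2) f = x :=
    g.M_matching u _ x (g.M_symm _ _ hM2) hM
  rw [hx] at hodd
  refine ⟨?_, by omega⟩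
  rwa [show p.length - 2 = a - 1 from by omega] at hodd

lemma tenacity_lt_of_baseOf {w u : V} (h : g.baseOf w u) :
    g.tenacity w < g.tenacity u := by
  have hmem : u ∈ g.Bset w := by rw [h]; rfl
  obtain ⟨p, f, i, _, _, _, hlt, _⟩ := hmem
  exact hlt

lemma lm_le_tenacity_start {p : List V} {f v : V} (hp : g.AltPathFrom p f v) :
    g.lm ≤ g.tenacity f :=
  le_trans (g.lm_le_oddlevel_of_unmatched hp.1) (by rw [tenacity]; exact le_add_self)

lemma exists_F {x u : V} (hbase : g.baseOf x u) {q : List V} {fq : V}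
    (hq : g.IsEvenlevelPath q fq x ∨ g.IsOddlevelPath q fq x)
    (hf : g.tenacity x < g.tenacity fq) :
    ∃ m, m < q.length ∧ q.getD m fq = u ∧
      ∀ k, m < k → k < q.length → g.tenacity (q.getD k fq) ≤ g.tenacity x := by
  classical
  have hpf : g.AltPathFrom q fq x := by
    rcases hq with h | h
    · exact h.1
    · exact h.1
  have h0 : 0 < q.length := length_pos_of_head? hpf.2.1
  set P : ℕ → Prop := fun j => g.tenacity x < g.tenacity (q.getD j fq) with hP
  have hP0 : P 0 := by
    show g.tenacity x < g.tenacity (q.getD 0 fq)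
    rw [getD_zero_of_head? hpf.2.1]; exact hf
  set m := Nat.findGreatest P (q.length - 1) with hm
  have hPm : P m := Nat.findGreatest_spec (Nat.zero_le _) hP0
  have hmax : ∀ k, m < k → k < q.length → ¬ P k := fun k hk hk2 =>
    Nat.findGreatest_is_greatest hk (by omega)
  have hmlt : m < q.length := lt_of_le_of_lt (Nat.findGreatest_le _) (by omega)
  have hmem : q.getD m fq ∈ g.Bset x :=
    ⟨q, fq, m, hq, hmlt, rfl, hPm, fun k hk hk2 => le_of_not_gt (hmax k hk hk2)⟩
  have hu : q.getD m fq = u := by rw [hbase] at hmem; exact hmem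
  exact ⟨m, hmlt, hu, fun k hk hk2 => le_of_not_gt (hmax k hk hk2)⟩

end MatchedGraph
end Helpers3
section Helpers4
variable {V : Type u}
namespace MatchedGraph
variable (g : MatchedGraph V)

/-- A matched edge cannot connect a vertex of smaller tenacity (within range) to
one of larger tenacity. -/
lemma no_matched_down {t : ℕ} (htlm : (t : ℕ∞) < g.lm)
    (hclaim : ∀ w, g.tenacity w ≤ (t : ℕ∞) → ∃ b', g.baseOf w b')
    {u x : V} (hM : g.M u x) (hx : g.tenacity x ≤ (t : ℕ∞))
    (hlt : g.tenacity x < g.tenacity u) : False := by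
  have hxt : g.tenacity x ≠ ⊤ := by
    intro h; rw [h] at hx
    exact absurd (lt_of_le_of_lt hx htlm) (by simp)
  obtain ⟨ax, bx, hax, hbx, hevx, hodx, htenx⟩ := g.exists_nat_levels hxt
  have haxne : ax ≠ 0 := by
    intro h0
    exact g.evenlevel_ne_zero_of_matched (g.M_symm _ _ hM) (by rw [hevx, h0]; simp)
  -- the even-level path of x ends with the matched edge (u, x)
  obtain ⟨p, f, hp, hpe, hpl⟩ := g.exists_evenlevel_path (v := x) (by rw [hevx]; simp)
  have hplen : p.length - 1 = ax := by rw [hevx] at hpl; exact_mod_cast hpl.symm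
  obtain ⟨hM2, _⟩ := g.second_last_matched hp (hplen ▸ hpe) (by omega)
  have hyu : p.getD (p.length - 2) f = u :=
    g.M_matching x _ u (g.M_symm _ _ hM2) (g.M_symm _ _ hM)
  -- hence u ∈ Bset x
  have hmemB : u ∈ g.Bset x := by
    refine ⟨p, f, p.length - 2, Or.inl ⟨hp, hpe, hpl.symm⟩, by omega, hyu.symm, hlt, ?_⟩
    intro k hk1 hk2
    have hk : k = p.length - 1 := by omega
    rw [hk, getD_last_of_getLast? hp.2.2.1]
  obtain ⟨b', hb'⟩ := hclaim x hx
  have hbu : g.baseOf x u := by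
    have : u = b' := by rw [hb'] at hmemB; exact hmemB
    rwa [← this] at hb'
  -- the odd-level path of x
  obtain ⟨Q, fQ, hQ, hQodd, hQl⟩ := g.exists_oddlevel_path (v := x) (by rw [hodx]; simp)
  have hQlen : Q.length - 1 = bx := by rw [hodx] at hQl; exact_mod_cast hQl.symm
  have hfQ : g.tenacity x < g.tenacity fQ :=
    lt_of_lt_of_le (lt_of_le_of_lt hx htlm) (g.lm_le_tenacity_start hQ)
  obtain ⟨m, hmlt, hmu, hall⟩ := g.exists_F hbu (Or.inr ⟨hQ, hQodd, hQl.symm⟩) hfQ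
  have hQ0 : 0 < Q.length := length_pos_of_head? hQ.2.1
  have hQlast : Q.getD (Q.length - 1) fQ = x := getD_last_of_getLast? hQ.2.2.1
  have hux : u ≠ x := by
    intro h; rw [h] at hlt; exact lt_irrefl _ hlt
  have hm2 : m ≤ Q.length - 2 := by
    rcases Nat.lt_or_ge m (Q.length - 1) with h | h
    · omega
    · exfalso; apply hux; rw [← hmu, show m = Q.length - 1 from by omega, hQlast]
  have hQ2 : 2 ≤ Q.length := by
    rcases hbx with ⟨j, hj⟩; omega
  rcases Nat.even_or_odd m with hmev | hmod
  · -- even position: evenlevel u ≤ m, contradicting the matched-edge bound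
    have htake := MatchedGraph.AltPath.take g hQ.2 (i := m) (by omega)
    have hlent : (Q.take (m + 1)).length = m + 1 := by rw [List.length_take]; omega
    have hevle : g.evenlevel u ≤ (m : ℕ∞) := by
      have := g.evenlevel_le ⟨hQ.1, hmu ▸ htake⟩ (by rw [hlent]; simpa using hmev)
      rwa [hlent, Nat.add_sub_cancel] at this
    obtain ⟨c, hc⟩ := WithTop.ne_top_iff_exists.mp (by
      intro h; rw [h] at hevle; exact absurd hevle (by simp) : g.evenlevel u ≠ ⊤)
    have hcm : c ≤ m := by rw [← hc] at hevle; exact Nat.cast_le.mp hevle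
    obtain ⟨hple, _⟩ := g.oddlevel_partner_le hM hc.symm
    rw [hodx] at hple
    have : bx ≤ c - 1 := by exact_mod_cast hple
    rcases hbx with ⟨j, hj⟩
    omega
  · -- odd position: the next edge is matched, forcing x in the middle of Q
    have hedge := hQ.2.2.2.2 m (by omega)
    have hMux : g.M u (Q.getD (m + 1) fQ) := by
      rw [← hmu]
      exact hedge.2.mpr (by rcases hmod with ⟨j, hj⟩; omega)
    have hxeq : Q.getD (m + 1) fQ = x := g.M_matching u _ x hMux hM
    have : m + 1 = Q.length - 1 := by
      apply nodup_getD_inj hQ.2.2.2.1 (by omega) (by omega) fQ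
      rw [hxeq, hQlast]
    rcases hmod with ⟨j, hj⟩
    rcases hbx with ⟨i, hi⟩
    omega
end MatchedGraph
end Helpers4
section Helpers5
variable {V : Type u}
namespace MatchedGraph
variable (g : MatchedGraph V)

lemma evenlevel_le_getD {p : List V} {f v : V} (hp : g.AltPathFrom p f v) {i : ℕ}
    (hi : i < p.length) (hpar : Even i) : g.evenlevel (p.getD i f) ≤ (i : ℕ∞) := by
  have htake := MatchedGraph.AltPath.take g hp.2 hi
  have hlen : (p.take (i + 1)).length = i + 1 := by rw [List.length_take]; omega
  have := g.evenlevel_le ⟨hp.1, htake⟩ (by rw [hlen]; simpa using hpar)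
  rwa [hlen, Nat.add_sub_cancel] at this

/-- If the vertex at an odd F-position, contradiction via the matched edge. -/
lemma F_odd_absurd {t : ℕ} (htlm : (t : ℕ∞) < g.lm)
    (hclaim : ∀ w, g.tenacity w ≤ (t : ℕ∞) → ∃ b', g.baseOf w b')
    {w u : V} (hwt : g.tenacity w ≤ (t : ℕ∞)) (hlt : g.tenacity w < g.tenacity u)
    {q : List V} {fq : V} (hq : g.AltPathFrom q fq w) {i : ℕ} (hiodd : Odd i)
    (hi1 : i + 1 < q.length) (hmu : q.getD i fq = u)
    (hallk : g.tenacity (q.getD (i + 1) fq) ≤ g.tenacity w) : False := by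
  have hedge := hq.2.2.2.2 i hi1
  have hMux : g.M u (q.getD (i + 1) fq) := by
    rw [← hmu]
    exact hedge.2.mpr (by rcases hiodd with ⟨j, hj⟩; omega)
  exact g.no_matched_down htlm hclaim hMux (le_trans hallk hwt)
    (lt_of_le_of_lt hallk hlt)

/-- Bases of vertices of small tenacity are outer. -/
lemma isOuter_base {t : ℕ} (htlm : (t : ℕ∞) < g.lm)
    (hclaim : ∀ w, g.tenacity w ≤ (t : ℕ∞) → ∃ b', g.baseOf w b')
    {w u : V} (hwu : g.baseOf w u) (hut : g.tenacity u ≤ (t : ℕ∞)) :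
    g.IsOuter u := by
  have hlt : g.tenacity w < g.tenacity u := g.tenacity_lt_of_baseOf hwu
  have hwt : g.tenacity w ≤ (t : ℕ∞) := le_trans hlt.le hut
  have hut' : g.tenacity u ≠ ⊤ := by
    intro h; rw [h] at hut; exact absurd (lt_of_le_of_lt hut htlm) (by simp)
  have hwt' : g.tenacity w ≠ ⊤ := by
    intro h; rw [h] at hwt; exact absurd (lt_of_le_of_lt hwt htlm) (by simp)
  obtain ⟨e, o, hee, hoo, heu, hou, htu⟩ := g.exists_nat_levels hut'
  obtain ⟨ew, ow, _, how, hew, howw, htw⟩ := g.exists_nat_levels hwt'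
  have hsum : ew + ow < e + o := by
    rw [htu, htw] at hlt; exact_mod_cast hlt
  have huw : u ≠ w := fun h => absurd (h ▸ hlt) (lt_irrefl _)
  -- the even-level path of w
  obtain ⟨p, f, hp, hpe, hpl⟩ := g.exists_evenlevel_path (v := w) (by rw [hew]; simp)
  have hplen : p.length - 1 = ew := by rw [hew] at hpl; exact_mod_cast hpl.symm
  have hfp : g.tenacity w < g.tenacity f :=
    lt_of_lt_of_le (lt_of_le_of_lt hwt htlm) (g.lm_le_tenacity_start hp)
  obtain ⟨i0, hi0lt, hi0u, hall0⟩ := g.exists_F hwu (Or.inl ⟨hp, hpe, hpl.symm⟩) hfp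
  have hi0ne : i0 ≠ p.length - 1 := by
    intro h
    exact huw (by rw [← hi0u, h, getD_last_of_getLast? hp.2.2.1])
  have hi0' : i0 + 1 < p.length := by omega
  -- the odd-level path of w
  obtain ⟨Q, fQ, hQ, hQo, hQl⟩ := g.exists_oddlevel_path (v := w) (by rw [howw]; simp)
  have hQlen : Q.length - 1 = ow := by rw [howw] at hQl; exact_mod_cast hQl.symm
  have hfQ : g.tenacity w < g.tenacity fQ :=
    lt_of_lt_of_le (lt_of_le_of_lt hwt htlm) (g.lm_le_tenacity_start hQ)
  obtain ⟨i1, hi1lt, hi1u, hall1⟩ := g.exists_F hwu (Or.inr ⟨hQ, hQo, hQl.symm⟩) hfQ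
  have hi1ne : i1 ≠ Q.length - 1 := by
    intro h
    exact huw (by rw [← hi1u, h, getD_last_of_getLast? hQ.2.2.1])
  have hi1' : i1 + 1 < Q.length := by omega
  -- both F-positions must be even
  rcases Nat.even_or_odd i0 with h0ev | h0od
  · rcases Nat.even_or_odd i1 with h1ev | h1od
    · -- both even: evenlevel u is small, so u is outer
      have hb0 : g.evenlevel u ≤ (i0 : ℕ∞) := hi0u ▸ g.evenlevel_le_getD hp hi0lt h0ev
      have hb1 : g.evenlevel u ≤ (i1 : ℕ∞) := hi1u ▸ g.evenlevel_le_getD hQ hi1lt h1ev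
      rw [heu] at hb0 hb1
      have he0 : e ≤ i0 := by exact_mod_cast hb0
      have he1 : e ≤ i1 := by exact_mod_cast hb1
      rw [IsOuter, heu, hou]
      have : e < o := by omega
      exact_mod_cast this
    · exact absurd (g.F_odd_absurd htlm hclaim hwt hlt hQ h1od hi1' hi1u
        (hall1 _ (by omega) hi1')) (by simp)
  · exact absurd (g.F_odd_absurd htlm hclaim hwt hlt hp h0od hi0' hi0u
      (hall0 _ (by omega) hi0')) (by simp)
end MatchedGraph
end Helpers5
section MainProof
variable {V : Type u}
namespace MatchedGraph
variable (g : MatchedGraph V)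

lemma blossom_succ (n : ℕ) (b : V) : g.blossom (n + 2) b =
    g.Sset (n + 2) b ∪
      ⋃ v ∈ {v | (v ∈ g.Sset (n + 2) b ∨ v = b) ∧ g.IsOuter v}, g.blossom n v := rfl

lemma main_aux : ∀ m : ℕ, ∀ k : ℕ, ∀ b v u : V,
    ((2 * m + 1 : ℕ) : ℕ∞) < g.lm → g.IsOuter b →
    ((2 * m + 1 : ℕ) : ℕ∞) < g.tenacity b →
    (∀ w, g.tenacity w ≤ ((2 * m + 1 : ℕ) : ℕ∞) → ∃ b', g.baseOf w b') →
    g.iterBase k v u → g.baseOf u b → g.tenacity u ≤ ((2 * m + 1 : ℕ) : ℕ∞) →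
    v ∈ g.blossom (2 * m + 1) b := by
  intro m
  induction m using Nat.strong_induction_on with
  | _ m ih =>
  intro k b v u htlm houter htb hclaim hit hub htu
  have htop : ((2 * m + 1 : ℕ) : ℕ∞) ≠ ⊤ := ENat.coe_ne_top _
  have hut' : g.tenacity u ≠ ⊤ := by
    intro h; rw [h] at htu; exact absurd (lt_of_le_of_lt htu htlm) (by simp)
  obtain ⟨e, o, hee, hoo, heu, hou, htuq⟩ := g.exists_nat_levels hut'
  have htunat : e + o ≤ 2 * m + 1 := by
    rw [htuq] at htu; exact_mod_cast htu
  have he0 : e ≠ 0 := by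
    intro h0
    have hunm : g.unmatched u := g.unmatched_of_evenlevel_eq_zero (by rw [heu, h0]; rfl)
    have hlmo : g.lm ≤ (o : ℕ∞) := hou ▸ g.lm_le_oddlevel_of_unmatched hunm
    have : ((o : ℕ) : ℕ∞) ≤ ((2 * m + 1 : ℕ) : ℕ∞) := by
      exact_mod_cast (by omega : o ≤ 2 * m + 1)
    exact absurd (lt_of_le_of_lt hlmo (lt_of_le_of_lt this htlm))
      (lt_irrefl _ ∘ (lt_trans · (lt_of_le_of_lt hlmo (lt_of_le_of_lt this htlm))))
  have he2 : 2 ≤ e := by rcases hee with ⟨j, hj⟩; omega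
  have ho1 : 1 ≤ o := by rcases hoo with ⟨j, hj⟩; omega
  have hm1 : 1 ≤ m := by omega
  have hrw : 2 * m + 1 = 2 * (m - 1) + 1 + 2 := by omega
  have hltlm' : ((2 * (m - 1) + 1 : ℕ) : ℕ∞) < g.lm :=
    lt_of_le_of_lt (by exact_mod_cast (by omega : 2 * (m-1) + 1 ≤ 2*m+1)) htlm
  have hclaim' : ∀ w, g.tenacity w ≤ ((2 * (m - 1) + 1 : ℕ) : ℕ∞) → ∃ b', g.baseOf w b' := by
    intro w hw
    exact hclaim w (le_trans hw (by exact_mod_cast (by omega : 2 * (m-1) + 1 ≤ 2*m+1)))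
  rcases eq_or_lt_of_le htu with hteq | htlt
  · -- tenacity u = 2m+1 : u ∈ Sset (2m+1) b
    have hSset : u ∈ g.Sset (2 * m + 1) b := ⟨hteq, hub⟩
    cases k with
    | zero =>
      rw [show g.iterBase 0 v u = (v = u) from rfl] at hit
      rw [hrw, g.blossom_succ]
      exact Set.mem_union_left _ (by rw [hit, ← hrw]; exact hSset)
    | succ j =>
      obtain ⟨w, hitw, hwu⟩ := hit
      have houteru : g.IsOuter u := g.isOuter_base htlm hclaim hwu htu
      have hlw : g.tenacity w < g.tenacity u := g.tenacity_lt_of_baseOf hwu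
      have hwt' : g.tenacity w ≠ ⊤ := fun h => absurd (h ▸ hlw) (by simp)
      obtain ⟨ew, ow, heew, hoow, _, _, htwq⟩ := g.exists_nat_levels hwt'
      have hwnat : ew + ow < 2 * m + 1 := by
        rw [htwq, hteq] at hlw
        exact_mod_cast hlw
      have hwsmall : g.tenacity w ≤ ((2 * (m - 1) + 1 : ℕ) : ℕ∞) := by
        rw [htwq]
        have : ew + ow ≤ 2 * (m - 1) + 1 := by
          rcases heew with ⟨j1, hj1⟩; rcases hoow with ⟨j2, hj2⟩; omega
        exact_mod_cast this
      have hmem := ih (m - 1) (by omega) j u v w hltlm' houteru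
        (by rw [hteq]; exact_mod_cast (by omega : 2 * (m-1) + 1 < 2 * m + 1))
        hclaim' hitw hwu hwsmall
      rw [hrw, g.blossom_succ]
      refine Set.mem_union_right _ ?_
      exact Set.mem_biUnion (⟨Or.inl (hrw ▸ hSset), houteru⟩ :
        u ∈ {y | (y ∈ g.Sset (2 * (m-1) + 1 + 2) b ∨ y = b) ∧ g.IsOuter y}) hmem
  · -- tenacity u < 2m+1 : recurse with the same base
    have husmall : g.tenacity u ≤ ((2 * (m - 1) + 1 : ℕ) : ℕ∞) := by
      rw [htuq]
      rw [htuq] at htlt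
      have h1 : e + o < 2 * m + 1 := by exact_mod_cast htlt
      have : e + o ≤ 2 * (m - 1) + 1 := by
        rcases hee with ⟨j1, hj1⟩; rcases hoo with ⟨j2, hj2⟩; omega
      exact_mod_cast this
    have hmem := ih (m - 1) (by omega) k b v u hltlm' houter
      (lt_of_le_of_lt (by exact_mod_cast (by omega : 2 * (m-1) + 1 ≤ 2*m+1)) htb)
      hclaim' hit hub husmall
    rw [hrw, g.blossom_succ]
    refine Set.mem_union_right _ ?_
    exact Set.mem_biUnion (⟨Or.inr rfl, houter⟩ :
      b ∈ {y | (y ∈ g.Sset (2 * (m-1) + 1 + 2) b ∨ y = b) ∧ g.IsOuter y}) hmem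

end MatchedGraph
end MainProof

/-- Let `B_{b,t}` be a blossom with `t < l_m`, and let `v` satisfy
`base^k(v) = b` for some `k ≥ 1`. If `t ≥ tenacity(base^{k-1}(v))` (with
`base^0(v) = v`), then `v ∈ B_{b,t}`. -/
theorem mem_blossom_of_iterBase (g : MatchedGraph V) (b v u : V) (t : ℕ)
    (hodd : Odd t) (htlm : (t : ℕ∞) < g.lm)
    (houter : g.IsOuter b) (htb : (t : ℕ∞) < g.tenacity b)
    (hclaim : ∀ w, g.tenacity w ≤ (t : ℕ∞) → ∃ b', g.baseOf w b')
    (k : ℕ) (hk : 1 ≤ k)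
    (hu : g.iterBase (k - 1) v u) (hub : g.baseOf u b)
    (htu : g.tenacity u ≤ (t : ℕ∞)) :
    v ∈ g.blossom t b := by
  obtain ⟨m, hm⟩ := hodd
  have ht : t = 2 * m + 1 := by omega
  rw [ht] at htlm htb htu ⊢
  exact g.main_aux m (k - 1) b v u htlm houter htb
    (fun w hw => hclaim w (by rw [ht]; exact hw)) hu hub htu
end

section
/- For eligible tenacity t, assuming every vertex of tenacity at most t has a unique base, the set of blossoms of tenacity at most t forms a laminar family: any two such blossoms are either disjoint or one contains the other. -/
open scoped Classical

universe u

variable {V : Type u}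

namespace MatchedGraph

lemma baseOf_unique (g : MatchedGraph V) {v b b' : V} (h : g.baseOf v b)
    (h' : g.baseOf v b') : b = b' :=
  Set.singleton_eq_singleton_iff.mp (h.symm.trans h')

lemma tenacity_lt_base (g : MatchedGraph V) {v b : V} (h : g.baseOf v b) :
    g.tenacity v < g.tenacity b := by
  have hb : b ∈ g.Bset v := by rw [h]; exact rfl
  obtain ⟨p, f, i, -, -, -, hlt, -⟩ := hb
  exact hlt

/-- A base-chain of length `k` from `v` up to `b` witnessing blossom membership. -/
def ChainK (g : MatchedGraph V) (k s : ℕ) (b v : V) : Prop :=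
  ∃ u : ℕ → V, u 0 = v ∧ u k = b ∧
    (∀ i < k, g.baseOf (u i) (u (i+1))) ∧
    (∀ i, 1 ≤ i → i < k → g.IsOuter (u i)) ∧
    (∀ i < k, ∃ n : ℕ, Odd n ∧ 2 ≤ n ∧ g.tenacity (u i) = (n : ℕ∞)) ∧
    g.tenacity (u (k-1)) ≤ (s : ℕ∞)

lemma blossom_step (g : MatchedGraph V) {b : V} (hb : g.IsOuter b) (s : ℕ) :
    g.blossom s b ⊆ g.blossom (s+2) b := by
  intro v hv
  have : v ∈ g.Sset (s+2) b ∪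
      ⋃ c ∈ {c | (c ∈ g.Sset (s+2) b ∨ c = b) ∧ g.IsOuter c}, g.blossom s c :=
    Or.inr (Set.mem_biUnion ⟨Or.inr rfl, hb⟩ hv)
  exact this

lemma blossom_mono (g : MatchedGraph V) {b : V} (hb : g.IsOuter b) {s s' : ℕ}
    (h1 : Odd s) (h2 : Odd s') (hle : s ≤ s') :
    g.blossom s b ⊆ g.blossom s' b := by
  obtain ⟨x, hx⟩ := h1
  obtain ⟨y, hy⟩ := h2
  obtain ⟨m, hm⟩ : ∃ m, s' = s + 2*m := ⟨y - x, by omega⟩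
  subst hm
  clear hx hy hle
  induction m with
  | zero => simp
  | succ m ih =>
    have h2 : s + 2*(m+1) = (s + 2*m) + 2 := by ring
    rw [h2]
    exact ih.trans (g.blossom_step hb _)

lemma mem_blossom_chainK (g : MatchedGraph V) :
    ∀ s b v, Odd s → v ∈ g.blossom s b → ∃ k, 0 < k ∧ g.ChainK k s b v := by
  intro s
  induction s using Nat.strong_induction_on with
  | _ s ih =>
  match s with
  | 0 => intro b v h _; exact absurd h (by decide)
  | 1 => intro b v _ hv; exact absurd hv (by simp [MatchedGraph.blossom])
  | (m+2) =>
    intro b v hodd hv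
    have hodd' : Odd m := by rcases hodd with ⟨x, hx⟩; exact ⟨x-1, by omega⟩
    have hv' : v ∈ g.Sset (m+2) b ∪
        ⋃ c ∈ {c | (c ∈ g.Sset (m+2) b ∨ c = b) ∧ g.IsOuter c}, g.blossom m c := hv
    rcases hv' with hv' | hv'
    · obtain ⟨hten, hbase⟩ := hv'
      refine ⟨1, one_pos, fun i => if i = 0 then v else b, by simp, by simp, ?_, ?_, ?_, ?_⟩
      · intro i hi
        have hi0 : i = 0 := by omega
        subst hi0
        show g.baseOf (if (0:ℕ) = 0 then v else b) (if (0:ℕ) + 1 = 0 then v else b)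
        simpa using hbase
      · intro i h1 h2; omega
      · intro i hi
        have hi0 : i = 0 := by omega
        subst hi0
        show ∃ n : ℕ, Odd n ∧ 2 ≤ n ∧ g.tenacity (if (0:ℕ) = 0 then v else b) = (n : ℕ∞)
        exact ⟨m+2, hodd, by omega, by simpa using hten⟩
      · show g.tenacity (if (1:ℕ) - 1 = 0 then v else b) ≤ ((m+2 : ℕ) : ℕ∞)
        simpa using le_of_eq hten
    · simp only [Set.mem_iUnion, Set.mem_setOf_eq, exists_prop] at hv'
      obtain ⟨c, ⟨hcmem, hcout⟩, hvc⟩ := hv'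
      obtain ⟨k, hk, u, hu0, huk, hbse, hout, hoddc, hlast⟩ := ih m (by omega) c v hodd' hvc
      rcases hcmem with hcS | hcb
      · obtain ⟨hctene, hcbase⟩ := hcS
        refine ⟨k+1, by omega, fun i => if i ≤ k then u i else b, ?_, ?_, ?_, ?_, ?_, ?_⟩
        · show (if 0 ≤ k then u 0 else b) = v
          simpa using hu0
        · show (if k + 1 ≤ k then u (k+1) else b) = b
          simp
        · intro i hi
          show g.baseOf (if i ≤ k then u i else b) (if i + 1 ≤ k then u (i+1) else b)
          by_cases h : i < k
          · rw [if_pos (by omega), if_pos (by omega)]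
            exact hbse i h
          · have hik : i = k := by omega
            subst hik
            rw [if_pos le_rfl, if_neg (by omega), huk]
            exact hcbase
        · intro i h1 h2
          show g.IsOuter (if i ≤ k then u i else b)
          by_cases h : i < k
          · rw [if_pos (by omega)]; exact hout i h1 h
          · have hik : i = k := by omega
            subst hik
            rw [if_pos le_rfl, huk]
            exact hcout
        · intro i hi
          show ∃ n : ℕ, Odd n ∧ 2 ≤ n ∧ g.tenacity (if i ≤ k then u i else b) = (n : ℕ∞)
          by_cases h : i < k
          · rw [if_pos (by omega)]; exact hoddc i h
          · have hik : i = k := by omega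
            subst hik
            rw [if_pos le_rfl, huk]
            exact ⟨m+2, hodd, by omega, hctene⟩
        · show g.tenacity (if k + 1 - 1 ≤ k then u (k+1-1) else b) ≤ ((m+2 : ℕ) : ℕ∞)
          rw [if_pos (by omega), show k + 1 - 1 = k from by omega, huk]
          exact le_of_eq hctene
      · subst hcb
        refine ⟨k, hk, u, hu0, huk, hbse, hout, hoddc, hlast.trans ?_⟩
        exact_mod_cast Nat.cast_le.mpr (by omega : m ≤ m + 2)

lemma chainK_mem_blossom (g : MatchedGraph V) :
    ∀ k s b v, 0 < k → Odd s → g.IsOuter b → g.ChainK k s b v →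
      v ∈ g.blossom s b := by
  intro k
  induction k with
  | zero => intro s b v h; omega
  | succ k ih =>
    rintro s b v - hs hb ⟨u, hu0, huk, hbase, hout, hoddc, hlast⟩
    have hlast' : g.tenacity (u k) ≤ (s : ℕ∞) := by
      have : k + 1 - 1 = k := by omega
      rwa [this] at hlast
    by_cases hk : k = 0
    · subst hk
      obtain ⟨n, hn, hn2, hnt⟩ := hoddc 0 (by omega)
      have hbase0 : g.baseOf v b := by
        have h := hbase 0 (by omega)
        rwa [hu0, huk] at h
      have hnle : n ≤ s := by
        rw [hu0] at hlast' hnt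
        rw [hnt] at hlast'
        exact_mod_cast hlast'
      obtain ⟨m, hm⟩ : ∃ m, n = m + 2 := ⟨n-2, by omega⟩
      have hmem : v ∈ g.blossom (m+2) b := by
        have : v ∈ g.Sset (m+2) b ∪
            ⋃ c ∈ {c | (c ∈ g.Sset (m+2) b ∨ c = b) ∧ g.IsOuter c}, g.blossom m c :=
          Or.inl ⟨by rw [← hm, ← hu0]; exact hnt, hbase0⟩
        exact this
      exact g.blossom_mono hb (hm ▸ hn) hs (by omega) hmem
    · set c := u k with hc
      obtain ⟨n', hn', hn2', hnt'⟩ := hoddc k (by omega)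
      have hcb : g.baseOf c b := by
        have h := hbase k (by omega)
        rwa [huk] at h
      have hcout : g.IsOuter c := hout k (by omega) (by omega)
      obtain ⟨n'', hodd'', h2'', hnt''⟩ := hoddc (k-1) (by omega)
      have hlt : g.tenacity (u (k-1)) < g.tenacity c := by
        have hb' := hbase (k-1) (by omega)
        have he : (k-1)+1 = k := by omega
        rw [he] at hb'
        exact g.tenacity_lt_base hb'
      have hnn : n'' + 2 ≤ n' := by
        have h1 : (n'' : ℕ∞) < (n' : ℕ∞) := by rw [← hnt'', ← hnt']; exact hlt
        have h2 : n'' < n' := by exact_mod_cast h1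
        rcases hodd'' with ⟨x, hx⟩
        rcases hn' with ⟨y, hy⟩
        omega
      have hchain : g.ChainK k (n' - 2) c v :=
        ⟨u, hu0, rfl, fun i hi => hbase i (by omega),
          fun i hi1 hi2 => hout i hi1 (by omega),
          fun i hi => hoddc i (by omega), by
            rw [hnt'']
            exact_mod_cast (by omega : n'' ≤ n' - 2)⟩
      have hoddn : Odd (n' - 2) := by rcases hn' with ⟨y, hy⟩; exact ⟨y-1, by omega⟩
      have hvmem := ih (n'-2) c v (by omega) hoddn hcout hchain
      have hcS : c ∈ g.Sset ((n'-2)+2) b := by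
        refine ⟨?_, hcb⟩
        rw [show n' - 2 + 2 = n' from by omega]
        exact hnt'
      have hmem : v ∈ g.blossom ((n'-2)+2) b := by
        have : v ∈ g.Sset ((n'-2)+2) b ∪
            ⋃ c' ∈ {c' | (c' ∈ g.Sset ((n'-2)+2) b ∨ c' = b) ∧ g.IsOuter c'},
              g.blossom (n'-2) c' :=
          Or.inr (Set.mem_biUnion ⟨Or.inl hcS, hcout⟩ hvmem)
        exact this
      have hn'le : n' ≤ s := by
        rw [hc, hnt'] at hlast'
        exact_mod_cast hlast'
      exact g.blossom_mono hb (by rw [show n' - 2 + 2 = n' from by omega]; exact hn')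
        hs (by omega) hmem

lemma chain_prefix (g : MatchedGraph V) {u₁ u₂ : ℕ → V} {k₁ k₂ : ℕ}
    (h0 : u₁ 0 = u₂ 0)
    (hb₁ : ∀ i < k₁, g.baseOf (u₁ i) (u₁ (i+1)))
    (hb₂ : ∀ i < k₂, g.baseOf (u₂ i) (u₂ (i+1))) :
    ∀ i, i ≤ k₁ → i ≤ k₂ → u₁ i = u₂ i := by
  intro i
  induction i with
  | zero => intro _ _; exact h0
  | succ i ih =>
    intro h1 h2
    have heq := ih (by omega) (by omega)
    have hA := hb₁ i (by omega)
    have hB := hb₂ i (by omega)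
    rw [← heq] at hB
    exact g.baseOf_unique hA hB

lemma blossom_subset_aux (g : MatchedGraph V) {t₁ t₂ : ℕ} (h₁ : Odd t₁) (h₂ : Odd t₂)
    {b₁ b₂ : V} (ho₂ : g.IsOuter b₂)
    {u : ℕ → V} {k₁ k₂ : ℕ} (hk0 : 0 < k₁) (hk : k₁ < k₂) (hub : u k₁ = b₁)
    (huk : u k₂ = b₂)
    (hbase : ∀ i < k₂, g.baseOf (u i) (u (i+1)))
    (hout : ∀ i, 1 ≤ i → i < k₂ → g.IsOuter (u i))
    (hoddc : ∀ i < k₂, ∃ n : ℕ, Odd n ∧ 2 ≤ n ∧ g.tenacity (u i) = (n : ℕ∞))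
    (hlast : g.tenacity (u (k₂-1)) ≤ (t₂ : ℕ∞)) :
    g.blossom t₁ b₁ ⊆ g.blossom t₂ b₂ := by
  intro w hw
  obtain ⟨kw, hkw, uw, hw0, hwk, hwbase, hwout, hwodd, hwlast⟩ :=
    g.mem_blossom_chainK t₁ b₁ w h₁ hw
  set u' : ℕ → V := fun i => if i < kw then uw i else u (k₁ + i - kw) with hu'
  have key : ∀ j, j ≤ kw → u' j = uw j := by
    intro j hj
    rcases lt_or_eq_of_le hj with h | h
    · show (if j < kw then uw j else u (k₁ + j - kw)) = uw j
      rw [if_pos h]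
    · subst h
      show (if j < j then uw j else u (k₁ + j - j)) = uw j
      rw [if_neg (lt_irrefl _), show k₁ + j - j = k₁ from by omega, hub, hwk]
  have key2 : ∀ j, kw ≤ j → u' j = u (k₁ + j - kw) := by
    intro j hj
    simp [hu', Nat.not_lt.mpr hj]
  refine g.chainK_mem_blossom (kw + (k₂ - k₁)) t₂ b₂ w (by omega) h₂ ho₂
    ⟨u', ?_, ?_, ?_, ?_, ?_, ?_⟩
  · rw [key 0 (by omega), hw0]
  · rw [key2 _ (by omega), show k₁ + (kw + (k₂ - k₁)) - kw = k₂ from by omega, huk]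
  · intro i hi
    by_cases h : i < kw
    · rw [key i (by omega), key (i+1) (by omega)]
      exact hwbase i h
    · rw [key2 i (by omega), key2 (i+1) (by omega),
        show k₁ + (i+1) - kw = (k₁ + i - kw) + 1 from by omega]
      exact hbase _ (by omega)
  · intro i hi1 hi2
    by_cases h : i < kw
    · rw [key i (by omega)]
      exact hwout i hi1 h
    · rw [key2 i (by omega)]
      exact hout _ (by omega) (by omega)
  · intro i hi
    by_cases h : i < kw
    · rw [key i (by omega)]
      exact hwodd i h
    · rw [key2 i (by omega)]
      exact hoddc _ (by omega)
  · rw [key2 _ (by omega), show k₁ + (kw + (k₂ - k₁) - 1) - kw = k₂ - 1 from by omega]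
    exact hlast

end MatchedGraph

/-- For eligible tenacity `t`, assuming unique bases for vertices
of tenacity at most `t`, the blossoms of tenacity at most `t` form a laminar
family. -/
theorem blossoms_laminar (g : MatchedGraph V) (t : ℕ) (hodd : Odd t)
    (he1 : g.tm ≤ (t : ℕ∞)) (he2 : (t : ℕ∞) < g.lm)
    (hclaim : ∀ w, g.tenacity w ≤ (t : ℕ∞) → ∃ b, g.baseOf w b)
    (t₁ t₂ : ℕ) (h₁ : Odd t₁) (h₂ : Odd t₂) (ht₁ : t₁ ≤ t) (ht₂ : t₂ ≤ t)
    (b₁ b₂ : V) (ho₁ : g.IsOuter b₁) (hb₁ : (t₁ : ℕ∞) < g.tenacity b₁)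
    (ho₂ : g.IsOuter b₂) (hb₂ : (t₂ : ℕ∞) < g.tenacity b₂) :
    Disjoint (g.blossom t₁ b₁) (g.blossom t₂ b₂) ∨
      g.blossom t₁ b₁ ⊆ g.blossom t₂ b₂ ∨
      g.blossom t₂ b₂ ⊆ g.blossom t₁ b₁ := by
  by_cases hdis : Disjoint (g.blossom t₁ b₁) (g.blossom t₂ b₂)
  · exact Or.inl hdis
  right
  rw [Set.not_disjoint_iff] at hdis
  obtain ⟨v, hv₁, hv₂⟩ := hdis
  obtain ⟨k₁', hk₁', u₁, h10, h1k, h1base, h1out, h1odd, h1last⟩ :=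
    g.mem_blossom_chainK t₁ b₁ v h₁ hv₁
  obtain ⟨k₂', hk₂', u₂, h20, h2k, h2base, h2out, h2odd, h2last⟩ :=
    g.mem_blossom_chainK t₂ b₂ v h₂ hv₂
  have h0 : u₁ 0 = u₂ 0 := by rw [h10, h20]
  rcases lt_trichotomy k₁' k₂' with hlt | heq | hgt
  · left
    have hub : u₂ k₁' = b₁ := by
      rw [← g.chain_prefix h0 h1base h2base k₁' le_rfl (le_of_lt hlt), h1k]
    exact g.blossom_subset_aux h₁ h₂ ho₂ hk₁' hlt hub h2k h2base h2out h2odd h2last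
  · have hbb : b₁ = b₂ := by
      rw [← h1k, ← h2k]
      have := g.chain_prefix h0 h1base h2base k₁' le_rfl (le_of_eq heq)
      rw [this, heq]
    rcases le_total t₁ t₂ with hle | hle
    · left
      rw [hbb]
      exact g.blossom_mono ho₂ h₁ h₂ hle
    · right
      rw [← hbb]
      exact g.blossom_mono ho₁ h₂ h₁ hle
  · right
    have hub : u₁ k₂' = b₂ := by
      rw [g.chain_prefix h0 h1base h2base k₂' (le_of_lt hgt) le_rfl, h2k]
    exact g.blossom_subset_aux h₂ h₁ ho₁ hk₂' hgt hub h1k h1base h1out h1odd h1last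
end
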